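/- A p-family is unique: if p and p' are two functions on balanced pairs of binary sequences with values in F = ℚ(q,a,t), both satisfying the five recursion rules (1)–(5), then p(v,w) = p'(v,w) for every balanced pair (v,w). -/
import Mathlib

open MvPolynomial

noncomputable section

/-- The field `F = ℚ(q,a,t)` of rational functions in three variables over `ℚ`. -/
abbrev KRF : Type := FractionRing (MvPolynomial (Fin 3) ℚ)

/-- The variable `q` in `F`. -/
def fq : KRF := algebraMap (MvPolynomial (Fin 3) ℚ) KRF (X 0)
/-- The variable `a` in `F`. -/
def fa : KRF := algebraMap (MvPolynomial (Fin 3) ℚ) KRF (X 1)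
/-- The variable `t` in `F`. -/
def ft : KRF := algebraMap (MvPolynomial (Fin 3) ℚ) KRF (X 2)

/-- The number `|v|` of ones in a binary sequence. -/
def onesCt (v : List Bool) : ℕ := v.count true

/-- A p-family: a function on (balanced) pairs of binary sequences with values in
`F = ℚ(q,a,t)` satisfying the five recursion rules (1)-(5). -/
def IsPFamily (p : List Bool → List Bool → KRF) : Prop :=
  (∀ n : ℕ, p [] (List.replicate n false) = ((1 + fa) / (1 - fq)) ^ n) ∧
  (∀ m : ℕ, p (List.replicate m false) [] = ((1 + fa) / (1 - fq)) ^ m) ∧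
  (∀ v w : List Bool, onesCt v = onesCt w →
      p (v ++ [true]) (w ++ [true]) = (ft ^ onesCt v + fa) * p v w) ∧
  (∀ v w : List Bool, onesCt v = onesCt w + 1 →
      p (v ++ [false]) (w ++ [true]) = p v (true :: w)) ∧
  (∀ v w : List Bool, onesCt v + 1 = onesCt w →
      p (v ++ [true]) (w ++ [false]) = p (true :: v) w) ∧
  (∀ v w : List Bool, onesCt v = onesCt w →
      p (v ++ [false]) (w ++ [false]) =
        ft ^ (-(onesCt v : ℤ)) * p (true :: v) (true :: w) +
          fq * ft ^ (-(onesCt v : ℤ)) * p (false :: v) (false :: w))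

lemma krf_one_sub_fq_ne : (1 : KRF) - fq ≠ 0 := by
  intro h
  have h2 : fq = 1 := by linear_combination -h
  have h3 : (X 0 : MvPolynomial (Fin 3) ℚ) = 1 := by
    apply IsFractionRing.injective (MvPolynomial (Fin 3) ℚ) KRF
    simpa [fq] using h2
  have := congrArg (MvPolynomial.eval (fun _ => (0 : ℚ))) h3
  simp at this

lemma all_false_of_count (l : List Bool) (h : l.count true = 0) :
    l = List.replicate l.length false := by
  rw [List.eq_replicate_iff]
  refine ⟨rfl, fun b hb => ?_⟩
  cases b
  · rfl
  · exact absurd hb (List.count_eq_zero.mp h)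

lemma takeWhile_append_of_mem (r s : List Bool) (h : true ∈ r) :
    ((r ++ s).takeWhile (fun b => !b)) = r.takeWhile (fun b => !b) := by
  induction r with
  | nil => simp at h
  | cons b r ih =>
    cases b
    · simp only [List.cons_append, List.takeWhile_cons]
      simp only [Bool.not_false, if_true]
      simp only [List.mem_cons] at h
      rcases h with h | h
      · exact absurd h.symm (by simp)
      · simp [ih h]
    · simp [List.takeWhile_cons]

lemma tz_concat_false (v : List Bool) :
    (((v ++ [false]).reverse.takeWhile (fun b => !b)).length) =
      ((v.reverse.takeWhile (fun b => !b)).length) + 1 := by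
  simp [List.takeWhile_cons]

lemma tz_cons_false (v : List Bool) (h : true ∈ v) :
    (((false :: v).reverse.takeWhile (fun b => !b)).length) =
      ((v.reverse.takeWhile (fun b => !b)).length) := by
  rw [List.reverse_cons, takeWhile_append_of_mem _ _ (by simpa using h)]

/-- A p-family is unique: any two p-families agree on all balanced pairs. -/
theorem pFamily_unique (p p' : List Bool → List Bool → KRF)
    (hp : IsPFamily p) (hp' : IsPFamily p')
    (v w : List Bool) (hvw : onesCt v = onesCt w) :
    p v w = p' v w := by
  rcases List.eq_nil_or_concat v with rfl | ⟨v', x, hv⟩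
  · -- v = []
    have hw0 : w.count true = 0 := by simpa [onesCt] using hvw.symm
    have hw : w = List.replicate w.length false := all_false_of_count w hw0
    rw [hw, hp.1, hp'.1]
  · rcases List.eq_nil_or_concat w with rfl | ⟨w', y, hw⟩
    · -- w = []
      have hv0 : v.count true = 0 := by simpa [onesCt] using hvw
      have hv : v = List.replicate v.length false := all_false_of_count v hv0
      rw [hv, hp.2.1, hp'.2.1]
    · subst hv; subst hw
      simp only [List.concat_eq_append] at *
      cases x <;> cases y
      · -- false, false
        have hl : onesCt v' = onesCt w' := by
          simpa [onesCt, List.count_append] using hvw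
        by_cases h0 : onesCt v' = 0
        · -- all-zeros case
          have hw0 : onesCt w' = 0 := hl ▸ h0
          have hvrep := all_false_of_count v' h0
          have hwrep := all_false_of_count w' hw0
          have hvrot : v' ++ [false] = false :: v' := by
            conv_lhs => rw [hvrep]
            conv_rhs => rw [hvrep]
            rw [← List.replicate_succ, ← List.replicate_succ']
          have hwrot : w' ++ [false] = false :: w' := by
            conv_lhs => rw [hwrep]
            conv_rhs => rw [hwrep]
            rw [← List.replicate_succ, ← List.replicate_succ']
          have hA : p (true :: v') (true :: w') = p' (true :: v') (true :: w') :=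
            pFamily_unique p p' hp hp' (true :: v') (true :: w')
              (by simpa [onesCt, List.count_cons] using hl)
          have e := hp.2.2.2.2.2 v' w' hl
          have e' := hp'.2.2.2.2.2 v' w' hl
          rw [h0] at e e'
          rw [hvrot, hwrot] at e e'
          rw [← hA] at e'
          simp only [Nat.cast_zero, neg_zero, zpow_zero, one_mul, mul_one] at e e'
          have hd : (1 - fq) * (p (false :: v') (false :: w') - p' (false :: v') (false :: w')) = 0 := by
            linear_combination e - e'
          rw [hvrot, hwrot]
          rcases mul_eq_zero.mp hd with h | h
          · exact absurd h krf_one_sub_fq_ne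
          · exact sub_eq_zero.mp h
        · -- v' contains a one
          have hA : p (true :: v') (true :: w') = p' (true :: v') (true :: w') :=
            pFamily_unique p p' hp hp' (true :: v') (true :: w')
              (by simpa [onesCt, List.count_cons] using hl)
          have hB : p (false :: v') (false :: w') = p' (false :: v') (false :: w') :=
            pFamily_unique p p' hp hp' (false :: v') (false :: w')
              (by simpa [onesCt, List.count_cons] using hl)
          rw [hp.2.2.2.2.2 v' w' hl, hp'.2.2.2.2.2 v' w' hl, hA, hB]
      · -- false, true
        have hl : onesCt v' = onesCt w' + 1 := by
          simpa [onesCt, List.count_append] using hvw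
        have hrec : p v' (true :: w') = p' v' (true :: w') :=
          pFamily_unique p p' hp hp' v' (true :: w')
            (by simpa [onesCt, List.count_cons] using hl)
        rw [hp.2.2.2.1 v' w' hl, hp'.2.2.2.1 v' w' hl, hrec]
      · -- true, false
        have hl : onesCt v' + 1 = onesCt w' := by
          simpa [onesCt, List.count_append] using hvw
        have hrec : p (true :: v') w' = p' (true :: v') w' :=
          pFamily_unique p p' hp hp' (true :: v') w'
            (by simpa [onesCt, List.count_cons] using hl)
        rw [hp.2.2.2.2.1 v' w' hl, hp'.2.2.2.2.1 v' w' hl, hrec]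
      · -- true, true
        have hl : onesCt v' = onesCt w' := by
          simpa [onesCt, List.count_append] using hvw
        have hrec : p v' w' = p' v' w' :=
          pFamily_unique p p' hp hp' v' w' hl
        rw [hp.2.2.1 v' w' hl, hp'.2.2.1 v' w' hl, hrec]
termination_by (v.length + w.length, v.count false + w.count false,
    (v.reverse.takeWhile (fun b => !b)).length)
decreasing_by
  all_goals simp_wf
  all_goals subst hv; subst hw
  all_goals try subst x
  all_goals try subst y
  all_goals simp only [Prod.lex_iff, List.concat_eq_append, List.length_append,
      List.count_append, List.count_cons, List.count_nil, List.length_cons,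
      List.length_nil, List.reverse_append, List.reverse_cons, List.reverse_nil,
      List.nil_append, List.cons_append, List.takeWhile_cons, Bool.not_false,
      if_true, reduceIte, true_and, and_true, beq_iff_eq, Bool.false_eq_true, Bool.true_eq_false, if_false, List.count_singleton']
  all_goals try omega
  all_goals
    have hm : true ∈ v'.reverse := by
      rw [List.mem_reverse]
      have : 0 < List.count true v' := Nat.pos_of_ne_zero (by simpa [onesCt] using h0)
      exact List.count_pos_iff.mp this
    rw [takeWhile_append_of_mem _ _ hm]
    omega
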